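/- If a, b, c are the vertices of a triangle listed in positive (counterclockwise) order, i.e., Im((b - a)·conj(c - a)) < 0 — equivalently the signed area Im(conj(b-a)·(c-a)) > 0 — then |a + τb + τ²c| < |ā + τ b̄ + τ² c̄|; consequently |μ(a,b,c)| < 1. -/

import Mathlib

open Complex ComplexConjugate

noncomputable def tau : ℂ := Complex.exp (2 * (Real.pi : ℂ) * Complex.I / 3)

noncomputable def mu (a b c : ℂ) : ℂ :=
  -(a + tau * b + tau ^ 2 * c) / (conj a + tau * conj b + tau ^ 2 * conj c)

lemma tau_eq : tau = Complex.mk (-(1/2)) (Real.sqrt 3 / 2) := by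
  have h : (2 * (Real.pi : ℂ) * Complex.I / 3) = ((2 * Real.pi / 3 : ℝ) : ℂ) * Complex.I := by
    push_cast; ring
  have hc : Real.cos (2 * Real.pi / 3) = -(1/2) := by
    have : (2 : ℝ) * Real.pi / 3 = Real.pi - Real.pi / 3 := by ring
    rw [this, Real.cos_pi_sub, Real.cos_pi_div_three]
  have hs : Real.sin (2 * Real.pi / 3) = Real.sqrt 3 / 2 := by
    have : (2 : ℝ) * Real.pi / 3 = Real.pi - Real.pi / 3 := by ring
    rw [this, Real.sin_pi_sub, Real.sin_pi_div_three]
  rw [tau, h, Complex.exp_mul_I, ← Complex.ofReal_cos, ← Complex.ofReal_sin, hc, hs]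
  apply Complex.ext <;> simp

lemma key (a b c : ℂ) :
    Complex.normSq (conj a + tau * conj b + tau ^ 2 * conj c)
      - Complex.normSq (a + tau * b + tau ^ 2 * c)
      = 2 * Real.sqrt 3 * (conj (b - a) * (c - a)).im := by
  have hs : Real.sqrt 3 ^ 2 = 3 := Real.sq_sqrt (by norm_num)
  rw [tau_eq]
  simp only [pow_two, Complex.normSq_apply, Complex.add_re, Complex.add_im, Complex.mul_re,
    Complex.mul_im, Complex.sub_re, Complex.sub_im, Complex.conj_re, Complex.conj_im]
  linear_combination (Real.sqrt 3 / 2) * (b.re * c.im - b.im * c.re) * hs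

theorem mu_lt_one_of_pos_oriented (a b c : ℂ)
    (hpos : 0 < (conj (b - a) * (c - a)).im) :
    ‖a + tau * b + tau ^ 2 * c‖
      < ‖conj a + tau * conj b + tau ^ 2 * conj c‖ ∧
    ‖mu a b c‖ < 1 := by
  have hsqrt : (0:ℝ) < Real.sqrt 3 := Real.sqrt_pos.mpr (by norm_num)
  have hk := key a b c
  have hlt : Complex.normSq (a + tau * b + tau ^ 2 * c)
      < Complex.normSq (conj a + tau * conj b + tau ^ 2 * conj c) := by nlinarith
  have habs : ‖a + tau * b + tau ^ 2 * c‖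
      < ‖conj a + tau * conj b + tau ^ 2 * conj c‖ := by
    rw [Complex.norm_def, Complex.norm_def]
    exact Real.sqrt_lt_sqrt (Complex.normSq_nonneg _) hlt
  refine ⟨habs, ?_⟩
  have hD : (0:ℝ) < ‖conj a + tau * conj b + tau ^ 2 * conj c‖ :=
    lt_of_le_of_lt (norm_nonneg _) habs
  rw [mu, norm_div, norm_neg, div_lt_one hD]
  exact habs
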